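/- Let a, b, f, g be polynomials over a field K of characteristic zero with gcd(f,g) = 1, g nonzero, satisfying a(n)g(n)f(n+1) - b(n)g(n+1)f(n) = b(n)g(n)g(n+1). Let k₀ = dis(a(n-1), b(n)) and G_{k₀+1}(n) = gcd(∏_{j=0}^{k₀} b(n+j), ∏_{j=1}^{k₀+1} a(n-j)). Then g(n) divides G_{k₀+1}(n). -/

import Mathlib

open Polynomial Finset

section GosperAux

/-- Key root lemma over an algebraically closed field: if `G ∣ B * G(x+1)` and
`G ∣ A * G(x-1)`, and `A` is coprime to all shifts `B(x+n)` for `n > k₀`, then a root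
of `G` cannot recur after more than `k₀` steps. -/
private lemma gosper_root_gap {k : Type*} [Field k] [IsAlgClosed k] [CharZero k]
    (A B G : k[X]) (hG : G ≠ 0)
    (h1 : G ∣ B * G.comp (X + 1)) (h2 : G ∣ A * G.comp (X - 1))
    (k₀ : ℕ) (hcop : ∀ n : ℕ, k₀ < n → IsCoprime A (B.comp (X + C (n : k))))
    (α : k) (hα : G.eval α = 0) (m : ℕ) (hm : k₀ < m) : G.eval (α + m) ≠ 0 := by
  intro hαm
  -- the set of forward shifts of α that are roots of G
  have hfinS : (Set.Finite {j : ℕ | G.eval (α + (j : k)) = 0}) := by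
    have : {j : ℕ | G.eval (α + (j : k)) = 0} =
        (fun j : ℕ => α + (j : k)) ⁻¹' {x | G.IsRoot x} := rfl
    rw [this]
    refine Set.Finite.preimage (Set.injOn_of_injective (fun x y hxy => ?_))
      (finite_setOf_isRoot hG)
    exact_mod_cast add_left_cancel hxy
  have hfinT : (Set.Finite {j : ℕ | G.eval (α - (j : k)) = 0}) := by
    have : {j : ℕ | G.eval (α - (j : k)) = 0} =
        (fun j : ℕ => α - (j : k)) ⁻¹' {x | G.IsRoot x} := rfl
    rw [this]
    refine Set.Finite.preimage (Set.injOn_of_injective (fun x y hxy => ?_))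
      (finite_setOf_isRoot hG)
    exact_mod_cast sub_right_injective hxy
  -- maximal forward shift s
  set S : Finset ℕ := hfinS.toFinset with hS
  have hmS : m ∈ S := hfinS.mem_toFinset.mpr hαm
  set s : ℕ := S.max' ⟨m, hmS⟩ with hs
  have hsmem : G.eval (α + (s : k)) = 0 :=
    hfinS.mem_toFinset.mp (S.max'_mem ⟨m, hmS⟩)
  have hsnot : G.eval (α + ((s + 1 : ℕ) : k)) ≠ 0 := by
    intro h
    have : s + 1 ∈ S := hfinS.mem_toFinset.mpr h
    exact absurd (S.le_max' _ this) (by omega)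
  have hms : m ≤ s := S.le_max' m hmS
  -- maximal backward shift t
  set T : Finset ℕ := hfinT.toFinset with hT
  have h0T : 0 ∈ T := hfinT.mem_toFinset.mpr (by simpa using hα)
  set t : ℕ := T.max' ⟨0, h0T⟩ with ht
  have htmem : G.eval (α - (t : k)) = 0 :=
    hfinT.mem_toFinset.mp (T.max'_mem ⟨0, h0T⟩)
  have htnot : G.eval (α - ((t + 1 : ℕ) : k)) ≠ 0 := by
    intro h
    have : t + 1 ∈ T := hfinT.mem_toFinset.mpr h
    exact absurd (T.le_max' _ this) (by omega)
  -- b vanishes at α + s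
  obtain ⟨q1, hq1⟩ := h1
  have hBs : B.eval (α + (s : k)) = 0 := by
    have := congrArg (Polynomial.eval (α + (s : k))) hq1
    simp only [eval_mul, eval_comp, eval_add, eval_X, eval_one, hsmem, zero_mul] at this
    rcases mul_eq_zero.mp this with h | h
    · exact h
    · exact absurd (by push_cast; rw [← add_assoc]; exact h) hsnot
  -- a(x-1) vanish at α - t  (here A plays the role of a(x-1))
  obtain ⟨q2, hq2⟩ := h2
  have hAt : A.eval (α - (t : k)) = 0 := by
    have := congrArg (Polynomial.eval (α - (t : k))) hq2
    simp only [eval_mul, eval_comp, eval_sub, eval_X, eval_one, htmem, zero_mul] at this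
    rcases mul_eq_zero.mp this with h | h
    · exact h
    · exact absurd (by push_cast; rw [← sub_sub]; exact h) htnot
  -- contradiction with the coprimality hypothesis at shift s + t
  have hcop' := (hcop (s + t) (by omega)).map (Polynomial.evalRingHom (α - (t : k)))
  simp only [coe_evalRingHom, hAt, eval_comp, eval_add, eval_X, eval_C] at hcop'
  have : B.eval (α - (t : k) + ((s + t : ℕ) : k)) = 0 := by
    have : α - (t : k) + ((s + t : ℕ) : k) = α + (s : k) := by push_cast; ring
    rw [this]; exact hBs
  rw [this] at hcop'
  exact not_isUnit_zero (isCoprime_zero_left.mp hcop')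

end GosperAux

/-- Theorem 2.2: the denominator `g` of a reduced rational solution of the Gosper
equation divides the limit `G_{k₀+1}` of the GCD sequence, where `k₀` is the
dispersion of `a(n-1)` and `b(n)`. -/
theorem denominator_divides_gcd_limit {K : Type*} [Field K] [CharZero K] [DecidableEq K]
    (a b f g : K[X]) (ha : a ≠ 0) (hb : b ≠ 0) (hg : g ≠ 0) (hfg : IsCoprime f g)
    (heq : a * g * f.comp (X + 1) - b * g.comp (X + 1) * f = b * g * g.comp (X + 1))
    (k₀ : ℕ)
    (hmax : 0 < (gcd (a.comp (X - 1)) (b.comp (X + C (k₀ : K)))).degree)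
    (hcop : ∀ k : ℕ, k₀ < k → IsCoprime (a.comp (X - 1)) (b.comp (X + C (k : K)))) :
    g ∣ gcd (∏ j ∈ range (k₀ + 1), b.comp (X + C (j : K)))
            (∏ j ∈ range (k₀ + 1), a.comp (X - C ((j : K) + 1))) := by
  -- Step 1 : g ∣ b * g(x+1)
  have hgb : g ∣ b * g.comp (X + 1) := by
    have hdvd : g ∣ f * (b * g.comp (X + 1)) :=
      ⟨a * f.comp (X + 1) - b * g.comp (X + 1), by linear_combination -heq⟩
    exact (hfg.symm).dvd_of_dvd_mul_left hdvd
  -- Step 2 : g ∣ a(x-1) * g(x-1)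
  have hga : g ∣ a.comp (X - 1) * g.comp (X - 1) := by
    have hfg1 : IsCoprime (f.comp (X + 1)) (g.comp (X + 1)) := by
      have := hfg.map (Polynomial.aeval (X + 1 : K[X])).toRingHom
      simpa [comp_eq_aeval] using this
    have hdvd : g.comp (X + 1) ∣ f.comp (X + 1) * (a * g) :=
      ⟨b * f + b * g, by linear_combination heq⟩
    have h2 : g.comp (X + 1) ∣ a * g := (hfg1.symm).dvd_of_dvd_mul_left hdvd
    have h3 := map_dvd (Polynomial.aeval (X - 1 : K[X])).toRingHom h2
    simp only [AlgHom.toRingHom_eq_coe, RingHom.coe_coe, ← comp_eq_aeval, mul_comp] at h3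
    rwa [comp_assoc, add_comp, X_comp, one_comp, sub_add_cancel, comp_X] at h3
  -- Step 3 : iterated divisibility, forward and backward
  have hB : ∀ m : ℕ,
      g ∣ (∏ j ∈ range m, b.comp (X + C (j : K))) * g.comp (X + C (m : K)) := by
    intro m
    induction m with
    | zero => simpa using dvd_refl g
    | succ n ih =>
      have step := map_dvd (Polynomial.aeval (X + C (n : K) : K[X])).toRingHom hgb
      simp only [AlgHom.toRingHom_eq_coe, RingHom.coe_coe, ← comp_eq_aeval, mul_comp] at step
      simp only [comp_assoc, add_comp, X_comp, one_comp] at step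
      have hcast : (X + C (n : K)) + 1 = X + C ((n + 1 : ℕ) : K) := by
        push_cast [C_add, C_1]; ring
      rw [hcast] at step
      calc g ∣ (∏ j ∈ range n, b.comp (X + C (j : K))) * g.comp (X + C (n : K)) := ih
        _ ∣ (∏ j ∈ range n, b.comp (X + C (j : K))) *
              (b.comp (X + C (n : K)) * g.comp (X + C ((n + 1 : ℕ) : K))) :=
            mul_dvd_mul_left _ step
        _ = (∏ j ∈ range (n + 1), b.comp (X + C (j : K))) *
              g.comp (X + C ((n + 1 : ℕ) : K)) := by rw [prod_range_succ]; ring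
  have hA : ∀ m : ℕ,
      g ∣ (∏ j ∈ range m, a.comp (X - C ((j : K) + 1))) * g.comp (X - C (m : K)) := by
    intro m
    induction m with
    | zero => simpa using dvd_refl g
    | succ n ih =>
      have step := map_dvd (Polynomial.aeval (X - C (n : K) : K[X])).toRingHom hga
      simp only [AlgHom.toRingHom_eq_coe, RingHom.coe_coe, ← comp_eq_aeval, mul_comp] at step
      simp only [comp_assoc, sub_comp, X_comp, one_comp] at step
      have hcast2 : (X - C (n : K)) - 1 = X - C ((n : K) + 1) := by
        rw [C_add, C_1]; ring
      rw [hcast2] at step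
      calc g ∣ (∏ j ∈ range n, a.comp (X - C ((j : K) + 1))) * g.comp (X - C (n : K)) := ih
        _ ∣ (∏ j ∈ range n, a.comp (X - C ((j : K) + 1))) *
              (a.comp (X - C ((n : K) + 1)) * g.comp (X - C ((n : K) + 1))) :=
            mul_dvd_mul_left _ step
        _ = (∏ j ∈ range (n + 1), a.comp (X - C ((j : K) + 1))) *
              g.comp (X - C ((n + 1 : ℕ) : K)) := by
            rw [prod_range_succ]; push_cast; ring
  -- Step 4 : coprimality of g with its shifts beyond the dispersion
  have main : ∀ m : ℕ, k₀ < m →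
      IsCoprime g (g.comp (X + C (m : K))) ∧ IsCoprime g (g.comp (X - C (m : K))) := by
    intro m hm
    set k := AlgebraicClosure K with hk
    let φ : K →+* k := algebraMap K k
    haveI : CharZero k := charZero_of_injective_algebraMap φ.injective
    set G : k[X] := g.map φ with hGdef
    have hGne : G ≠ 0 := Polynomial.map_ne_zero hg
    have h1 : G ∣ (b.map φ) * G.comp (X + 1) := by
      have := map_dvd (Polynomial.mapRingHom φ) hgb
      simpa [Polynomial.map_comp] using this
    have h2 : G ∣ ((a.comp (X - 1)).map φ) * G.comp (X - 1) := by
      have := map_dvd (Polynomial.mapRingHom φ) hga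
      simpa [Polynomial.map_comp, Polynomial.map_comp (p := g)] using this
    have hcopk : ∀ n : ℕ, k₀ < n →
        IsCoprime ((a.comp (X - 1)).map φ) ((b.map φ).comp (X + C (n : k))) := by
      intro n hn
      have := (hcop n hn).map (Polynomial.mapRingHom φ)
      rw [C_eq_natCast]
      simpa [Polynomial.map_comp, map_natCast] using this
    have key := gosper_root_gap ((a.comp (X - 1)).map φ) (b.map φ) G hGne h1 h2 k₀ hcopk
    -- a common-root extractor for the two coprimality goals
    have extract : ∀ h : K[X], ¬ IsCoprime g h →
        ∃ α : k, G.eval α = 0 ∧ (h.map φ).eval α = 0 := by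
      intro h hnc
      set d := EuclideanDomain.gcd g h with hd
      have hdnu : ¬ IsUnit d := fun hu => hnc (EuclideanDomain.gcd_isUnit_iff.mp hu)
      have hdne : d ≠ 0 := fun h0 => hg (EuclideanDomain.gcd_eq_zero_iff.mp h0).1
      have hdeg : (d.map φ).degree ≠ 0 := by
        rw [Polynomial.degree_map]
        exact fun h0 => hdnu (Polynomial.isUnit_iff_degree_eq_zero.mpr h0)
      obtain ⟨α, hα⟩ := IsAlgClosed.exists_root (d.map φ) hdeg
      refine ⟨α, ?_, ?_⟩
      · exact hα.dvd (map_dvd (Polynomial.mapRingHom φ)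
          (EuclideanDomain.gcd_dvd_left g h))
      · exact hα.dvd (map_dvd (Polynomial.mapRingHom φ)
          (EuclideanDomain.gcd_dvd_right g h))
    constructor
    · by_contra hnc
      obtain ⟨α, hr1, hr2⟩ := extract _ hnc
      have hr2' : G.eval (α + (m : k)) = 0 := by
        have : (g.comp (X + C (m : K))).map φ = G.comp (X + C ((m : ℕ) : k)) := by
          rw [C_eq_natCast (R := k)]
          simp [Polynomial.map_comp, map_natCast, hGdef]
        rw [this] at hr2
        simpa [eval_comp] using hr2
      exact key α hr1 m hm hr2'
    · by_contra hnc
      obtain ⟨α, hr1, hr2⟩ := extract _ hnc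
      have hr2' : G.eval (α - (m : k)) = 0 := by
        have : (g.comp (X - C (m : K))).map φ = G.comp (X - C ((m : ℕ) : k)) := by
          rw [C_eq_natCast (R := k)]
          simp [Polynomial.map_comp, map_natCast, hGdef]
        rw [this] at hr2
        simpa [eval_comp] using hr2
      have : G.eval ((α - (m : k)) + (m : k)) ≠ 0 := key (α - (m : k)) hr2' m hm
      rw [sub_add_cancel] at this
      exact this hr1
  obtain ⟨hplus, hminus⟩ := main (k₀ + 1) (Nat.lt_succ_self k₀)
  have hBdvd : g ∣ ∏ j ∈ range (k₀ + 1), b.comp (X + C (j : K)) :=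
    hplus.dvd_of_dvd_mul_right (hB (k₀ + 1))
  have hAdvd : g ∣ ∏ j ∈ range (k₀ + 1), a.comp (X - C ((j : K) + 1)) :=
    hminus.dvd_of_dvd_mul_right (hA (k₀ + 1))
  exact dvd_gcd hBdvd hAdvd
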